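/- For every closed PGA term t, there exists a closed PGA term t' in first canonical form (i.e., t' is either a repetition-free closed term s, or of the form s ; s'^ω with s, s' repetition-free closed terms) such that t = t' is derivable from the axioms PGA1–PGA4 of instruction sequence congruence. -/
import Mathlib


/-- PGA terms over a set `I` of primitive instructions. -/
inductive PGATerm (I : Type) where
  | ins : I → PGATerm I
  | seq : PGATerm I → PGATerm I → PGATerm I
  | rep : PGATerm I → PGATerm I

/-- `pw t n` is `t^{n+1}`: `t^1 = t`, `t^{n+1} = t ; t^n`. -/
def PGATerm.pw {I : Type} (t : PGATerm I) : ℕ → PGATerm I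
  | 0 => t
  | n + 1 => .seq t (t.pw n)

/-- A term is repetition-free if `^ω` does not occur in it. -/
inductive PGATerm.RepFree {I : Type} : PGATerm I → Prop where
  | ins (u : I) : RepFree (.ins u)
  | seq {s t} : RepFree s → RepFree t → RepFree (.seq s t)

/-- First canonical form: a repetition-free term `s`, or `s ; s'^ω` with
`s`, `s'` repetition-free. -/
def PGATerm.FirstCanonical {I : Type} (t : PGATerm I) : Prop :=
  t.RepFree ∨ ∃ s s' : PGATerm I, t = .seq s (.rep s') ∧ s.RepFree ∧ s'.RepFree

/-- Equational derivability from the instruction sequence congruence axioms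
PGA1–PGA4. -/
inductive PGADeriv {I : Type} : PGATerm I → PGATerm I → Prop where
  | refl (t) : PGADeriv t t
  | symm {t t'} : PGADeriv t t' → PGADeriv t' t
  | trans {t t' t''} : PGADeriv t t' → PGADeriv t' t'' → PGADeriv t t''
  | seqCongr {s s' t t'} : PGADeriv s s' → PGADeriv t t' →
      PGADeriv (.seq s t) (.seq s' t')
  | repCongr {t t'} : PGADeriv t t' → PGADeriv (.rep t) (.rep t')
  | pga1 (x y z) : PGADeriv (.seq (.seq x y) z) (.seq x (.seq y z))
  | pga2 (x) (n : ℕ) : PGADeriv (.rep (x.pw n)) (.rep x)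
  | pga3 (x y) : PGADeriv (.seq (.rep x) y) (.rep x)
  | pga4 (x y) : PGADeriv (.rep (.seq x y)) (.seq x (.rep (.seq y x)))

/-- `z^ω = z ; z^ω`, via PGA2 (n = 1) and PGA4. -/
lemma PGADeriv.unfold {I : Type} (z : PGATerm I) :
    PGADeriv (.rep z) (.seq z (.rep z)) := by
  have h1 : PGADeriv (PGATerm.rep z) (.rep (z.pw 1)) := .symm (.pga2 z 1)
  have h2 : PGADeriv (PGATerm.rep (z.pw 1)) (.seq z (.rep (.seq z z))) := .pga4 z z
  have h3 : PGADeriv (PGATerm.seq z (.rep (.seq z z))) (.seq z (.rep z)) :=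
    .seqCongr (.refl z) (.pga2 z 1)
  exact .trans h1 (.trans h2 h3)

/-- `(x^ω)^ω = x^ω`. -/
lemma PGADeriv.repRep {I : Type} (x : PGATerm I) :
    PGADeriv (.rep (.rep x)) (.rep x) :=
  .trans (PGADeriv.unfold (.rep x)) (.pga3 x (.rep (.rep x)))

/-- Every closed PGA term is provably equal, from PGA1–PGA4, to a term in
first canonical form. -/
theorem exists_first_canonical_form {I : Type} (t : PGATerm I) :
    ∃ t' : PGATerm I, t'.FirstCanonical ∧ PGADeriv t t' := by
  induction t with
  | ins u => exact ⟨.ins u, Or.inl (.ins u), .refl _⟩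
  | seq a b iha ihb =>
    obtain ⟨a', ha, da⟩ := iha
    obtain ⟨b', hb, db⟩ := ihb
    have d0 : PGADeriv (PGATerm.seq a b) (.seq a' b') := .seqCongr da db
    rcases ha with hra | ⟨s, s', rfl, hs, hs'⟩
    · rcases hb with hrb | ⟨u, u', rfl, hu, hu'⟩
      · exact ⟨.seq a' b', Or.inl (.seq hra hrb), d0⟩
      · refine ⟨.seq (.seq a' u) (.rep u'), Or.inr ⟨_, _, rfl, .seq hra hu, hu'⟩, ?_⟩
        exact .trans d0 (.symm (.pga1 a' u (.rep u')))
    · refine ⟨.seq s (.rep s'), Or.inr ⟨_, _, rfl, hs, hs'⟩, ?_⟩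
      exact .trans d0 (.trans (.pga1 s (.rep s') b')
        (.seqCongr (.refl s) (.pga3 s' b')))
  | rep a iha =>
    obtain ⟨a', ha, da⟩ := iha
    have d0 : PGADeriv (PGATerm.rep a) (.rep a') := .repCongr da
    rcases ha with hra | ⟨s, s', rfl, hs, hs'⟩
    · exact ⟨.seq a' (.rep a'), Or.inr ⟨_, _, rfl, hra, hra⟩,
        .trans d0 (PGADeriv.unfold a')⟩
    · refine ⟨.seq s (.rep s'), Or.inr ⟨_, _, rfl, hs, hs'⟩, ?_⟩
      refine .trans d0 (.trans (.pga4 s (.rep s')) (.seqCongr (.refl s) ?_))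
      exact .trans (.repCongr (.pga3 s' s)) (PGADeriv.repRep s')
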